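/- A graph G is a cograph if and only if every induced subgraph of G with more than one vertex has either a pair of duplicate vertices or a pair of coduplicate vertices. -/

import Mathlib

open scoped Classical

noncomputable section

/-- The real adjacency matrix of a finite simple graph. -/
def adjM {V : Type*} [Fintype V] (G : SimpleGraph V) : Matrix V V ℝ :=
  G.adjMatrix ℝ

/-- The multiplicity of `μ` as an eigenvalue of the adjacency matrix of `G`
(the dimension of the corresponding eigenspace; `0` if `μ` is not an eigenvalue). -/
def eigMult {V : Type*} [Fintype V] (G : SimpleGraph V) (μ : ℝ) : ℕ :=
  Module.finrank ℝ (Module.End.eigenspace (Matrix.toLin' (adjM G)) μ)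

/-- `μ` is an eigenvalue of the adjacency matrix of `G`. -/
def HasEig {V : Type*} [Fintype V] (G : SimpleGraph V) (μ : ℝ) : Prop :=
  Module.End.HasEigenvalue (Matrix.toLin' (adjM G)) μ

/-- A cograph: no induced path on four vertices. -/
def IsCograph {V : Type*} (G : SimpleGraph V) : Prop :=
  IsEmpty (SimpleGraph.pathGraph 4 ↪g G)

/-- A duplication class: a maximal set of more than one vertex, all with the same
open neighborhood. -/
def IsDupClass {V : Type*} (G : SimpleGraph V) (S : Set V) : Prop :=
  1 < S.ncard ∧ (∀ u ∈ S, ∀ v ∈ S, G.neighborSet u = G.neighborSet v) ∧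
    ∀ T : Set V, S ⊆ T → (∀ u ∈ T, ∀ v ∈ T, G.neighborSet u = G.neighborSet v) → T = S

/-- A coduplication class: a maximal set of more than one vertex, all with the same
closed neighborhood. -/
def IsCodupClass {V : Type*} (G : SimpleGraph V) (S : Set V) : Prop :=
  1 < S.ncard ∧
    (∀ u ∈ S, ∀ v ∈ S, insert u (G.neighborSet u) = insert v (G.neighborSet v)) ∧
    ∀ T : Set V, S ⊆ T →
      (∀ u ∈ T, ∀ v ∈ T, insert u (G.neighborSet u) = insert v (G.neighborSet v)) → T = S


namespace CographAux

open SimpleGraph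

universe u

variable {V : Type u}

/-- twins exist -/
def Tw (G : SimpleGraph V) : Prop :=
  ∃ u v, u ≠ v ∧ (G.neighborSet u = G.neighborSet v ∨
    insert u (G.neighborSet u) = insert v (G.neighborSet v))

lemma walk_closed {G : SimpleGraph V} {t : Set V}
    (ht : ∀ a b, a ∈ t → G.Adj a b → b ∈ t) :
    ∀ {x y : V}, G.Walk x y → x ∈ t → y ∈ t
  | _, _, .nil, hx => hx
  | _, _, .cons h p, hx => walk_closed ht p (ht _ _ hx h)

lemma walk_first {G : SimpleGraph V} {x y : V} (w : G.Walk x y) (hxy : x ≠ y) :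
    ∃ z, G.Adj x z := by
  cases w with
  | nil => exact absurd rfl hxy
  | cons h p => exact ⟨_, h⟩

lemma walk_edge {G : SimpleGraph V} (P : V → Prop) :
    ∀ {x y : V}, G.Walk x y → P x → ¬P y →
      ∃ a b, G.Adj a b ∧ P a ∧ ¬P b ∧ G.Reachable x a
  | _, _, .nil, hx, hy => absurd hx hy
  | x, y, .cons (v := v) h p, hx, hy => by
    by_cases h2 : P v
    · obtain ⟨a, b, hab, ha, hb, hr⟩ := walk_edge P p h2 hy
      exact ⟨a, b, hab, ha, hb, (SimpleGraph.Adj.reachable h).trans hr⟩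
    · exact ⟨x, v, h, hx, h2, SimpleGraph.Reachable.refl x⟩

lemma edgeless_not_preconn {G : SimpleGraph V} (h : ∀ p q, ¬G.Adj p q)
    {x y : V} (hxy : x ≠ y) : ¬G.Preconnected := fun hp => by
  obtain ⟨w⟩ := hp x y
  obtain ⟨z, hz⟩ := walk_first w hxy
  exact h _ _ hz

lemma compl_neighborSet (G : SimpleGraph V) (u : V) :
    Gᶜ.neighborSet u = (insert u (G.neighborSet u))ᶜ := by
  ext w
  simp [SimpleGraph.compl_adj, eq_comm, and_comm, not_or]

lemma insert_compl_neighborSet (G : SimpleGraph V) (u : V) :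
    insert u (Gᶜ.neighborSet u) = (G.neighborSet u)ᶜ := by
  ext w
  by_cases h : w = u
  · subst h; simp [SimpleGraph.compl_adj, fun h' => G.ne_of_adj h' rfl]
  · simp [SimpleGraph.compl_adj, h, Ne.symm h]

lemma tw_compl {G : SimpleGraph V} (h : Tw Gᶜ) : Tw G := by
  obtain ⟨u, v, huv, h⟩ := h
  refine ⟨u, v, huv, ?_⟩
  rcases h with h | h
  · right
    rw [compl_neighborSet, compl_neighborSet, compl_inj_iff] at h
    exact h
  · left
    rw [insert_compl_neighborSet, insert_compl_neighborSet, compl_inj_iff] at h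
    exact h

lemma compl_induce (G : SimpleGraph V) (s : Set V) :
    (G.induce s)ᶜ = Gᶜ.induce s := by
  ext a b
  simp only [SimpleGraph.compl_adj, SimpleGraph.comap_adj, Function.Embedding.coe_subtype]
  constructor
  · rintro ⟨h1, h2⟩; exact ⟨Subtype.coe_injective.ne h1, h2⟩
  · rintro ⟨h1, h2⟩; exact ⟨fun e => h1 (congrArg _ e), h2⟩


lemma cograph_induce {G : SimpleGraph V} (h : IsCograph G) (s : Set V) :
    IsCograph (G.induce s) :=
  ⟨fun f => h.false ((SimpleGraph.Embedding.induce s).comp f)⟩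

lemma cograph_compl {G : SimpleGraph V} (h : IsCograph G) : IsCograph Gᶜ := by
  refine ⟨fun f => h.false ?_⟩
  have hσ : Function.Injective (![1, 3, 0, 2] : Fin 4 → Fin 4) := by decide
  refine ⟨⟨fun i => f (![1, 3, 0, 2] i), f.injective.comp hσ⟩, ?_⟩
  intro a b
  simp only [Function.Embedding.coeFn_mk]
  have key : ∀ x y : Fin 4, G.Adj (f x) (f y) ↔ (x ≠ y ∧ ¬(pathGraph 4).Adj x y) := by
    intro x y
    have h1 : (Gᶜᶜ).Adj (f x) (f y) ↔ (f x ≠ f y ∧ ¬Gᶜ.Adj (f x) (f y)) :=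
      SimpleGraph.compl_adj _ _ _
    rw [compl_compl, f.map_adj_iff, f.injective.ne_iff] at h1
    exact h1
  rw [key]
  simp only [SimpleGraph.pathGraph_adj, ne_eq]
  revert a b; decide

def p4_embed {G : SimpleGraph V} {a b c d : V}
    (hab : G.Adj a b) (hbc : G.Adj b c) (hcd : G.Adj c d)
    (hac : ¬G.Adj a c) (had : ¬G.Adj a d) (hbd : ¬G.Adj b d) :
    SimpleGraph.pathGraph 4 ↪g G := by
  have nab := hab.ne
  have nbc := hbc.ne
  have ncd := hcd.ne
  have nac : a ≠ c := fun e => had (e ▸ hcd)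
  have nbd : b ≠ d := fun e => had (e ▸ hab)
  have nad : a ≠ d := fun e => hac (e ▸ hcd.symm)
  have hba := hab.symm; have hcb := hbc.symm; have hdc := hcd.symm
  have hca : ¬G.Adj c a := fun h => hac h.symm
  have hda : ¬G.Adj d a := fun h => had h.symm
  have hdb : ¬G.Adj d b := fun h => hbd h.symm
  refine ⟨⟨![a, b, c, d], ?_⟩, ?_⟩
  · intro i j hij
    fin_cases i <;> fin_cases j <;> simp_all <;> (first | rfl | exact absurd hij (by assumption) | exact absurd hij.symm (by assumption))
  · intro i j
    show G.Adj (![a, b, c, d] i) (![a, b, c, d] j) ↔ _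
    fin_cases i <;> fin_cases j <;>
      simp_all [SimpleGraph.pathGraph_adj, G.irrefl] <;> decide

lemma s1 {G : SimpleGraph V} (hG : IsCograph G) (v : V)
    (h : ¬(G.induce {w | w ≠ v}).Preconnected) :
    ¬G.Preconnected ∨ ¬Gᶜ.Preconnected := by
  set s : Set V := {w | w ≠ v} with hs
  set G' := G.induce s with hG'
  have hadj : ∀ a b : ↥s, G'.Adj a b ↔ G.Adj ↑a ↑b := by
    intro a b; simp [hG']
  simp only [SimpleGraph.Preconnected, not_forall] at h
  obtain ⟨a₀, b₀, hab₀⟩ := h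
  by_cases hB : ∀ w, w ≠ v → G.Adj v w
  · right
    intro hp
    obtain ⟨w⟩ := hp v ↑a₀
    obtain ⟨z, hz⟩ := walk_first w (Ne.symm a₀.2)
    rw [SimpleGraph.compl_adj] at hz
    exact hz.2 (hB z (Ne.symm hz.1))
  · push_neg at hB
    obtain ⟨w₀, hw₀v, hw₀⟩ := hB
    by_cases hA : ∀ u : ↥s, ∃ x : ↥s, G'.Reachable u x ∧ G.Adj v ↑x
    · exfalso
      obtain ⟨x, hrx, hvx⟩ := hA ⟨w₀, hw₀v⟩
      obtain ⟨p⟩ := hrx.symm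
      obtain ⟨α, β, hαβ, hvα, hvβ, hrα⟩ :=
        walk_edge (fun z : ↥s => G.Adj v ↑z) p hvx hw₀
      have hrwα : G'.Reachable ⟨w₀, hw₀v⟩ α := hrx.trans hrα
      have hz₀ : ∃ z₀ : ↥s, ¬G'.Reachable ⟨w₀, hw₀v⟩ z₀ := by
        by_cases h1 : G'.Reachable ⟨w₀, hw₀v⟩ a₀
        · exact ⟨b₀, fun h2 => hab₀ (h1.symm.trans h2)⟩
        · exact ⟨a₀, h1⟩
      obtain ⟨z₀, hz₀⟩ := hz₀
      obtain ⟨c, hrc, hvc⟩ := hA z₀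
      have hnac : ¬G'.Reachable α c := fun h =>
        hz₀ ((hrwα.trans h).trans hrc.symm)
      have hnbc : ¬G'.Reachable β c := fun h =>
        hnac ((SimpleGraph.Adj.reachable hαβ).trans h)
      -- P4 : ↑β - ↑α - v - ↑c
      refine hG.false (p4_embed (a := ↑β) (b := ↑α) (c := v) (d := ↑c)
        ((hadj _ _).mp hαβ.symm) hvα.symm hvc ?_ ?_ ?_)
      · intro h2; exact hvβ h2.symm
      · intro h2
        exact hnbc (SimpleGraph.Adj.reachable ((hadj β c).mpr h2))
      · intro h2
        exact hnac (SimpleGraph.Adj.reachable ((hadj α c).mpr h2))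
    · left
      push_neg at hA
      obtain ⟨u, hu⟩ := hA
      intro hp
      set t : Set V := {w | ∃ h : w ∈ s, G'.Reachable u ⟨w, h⟩} with ht
      have hclosed : ∀ a b, a ∈ t → G.Adj a b → b ∈ t := by
        rintro a b ⟨ha, hra⟩ hadj'
        have hbv : b ≠ v := by
          rintro rfl
          exact hu ⟨a, ha⟩ hra hadj'.symm
        exact ⟨hbv, hra.trans (SimpleGraph.Adj.reachable
          ((hadj ⟨a, ha⟩ ⟨b, hbv⟩).mpr hadj'))⟩
      obtain ⟨w⟩ := hp ↑u v
      have : v ∈ t := walk_closed hclosed w ⟨u.2, SimpleGraph.Reachable.refl u⟩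
      exact this.1 rfl

lemma seinsche : ∀ (n : ℕ) (V : Type u) [Fintype V] (G : SimpleGraph V),
    Fintype.card V ≤ n → IsCograph G → 2 ≤ Fintype.card V →
    ¬G.Preconnected ∨ ¬Gᶜ.Preconnected := by
  intro n
  induction n with
  | zero => intro V _ G h _ h2; omega
  | succ n IH =>
    intro V _ G hle hG h2
    rcases eq_or_lt_of_le h2 with h2' | h2'
    · -- exactly two vertices
      have hn2 : Nat.card V = 2 := by rw [Nat.card_eq_fintype_card]; omega
      obtain ⟨x, y, hxy, hu⟩ := Nat.card_eq_two_iff.mp hn2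
      have hmem : ∀ z : V, z = x ∨ z = y := by
        intro z
        have : z ∈ ({x, y} : Set V) := hu ▸ Set.mem_univ z
        simpa using this
      by_cases hadj : G.Adj x y
      · right
        refine edgeless_not_preconn (fun p q hpq => ?_) hxy
        rw [SimpleGraph.compl_adj] at hpq
        rcases hmem p with rfl | rfl <;> rcases hmem q with rfl | rfl
        · exact hpq.1 rfl
        · exact hpq.2 hadj
        · exact hpq.2 hadj.symm
        · exact hpq.1 rfl
      · left
        refine edgeless_not_preconn (fun p q hpq => ?_) hxy
        rcases hmem p with rfl | rfl <;> rcases hmem q with rfl | rfl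
        · exact G.irrefl hpq
        · exact hadj hpq
        · exact hadj hpq.symm
        · exact G.irrefl hpq
    · -- at least 3 vertices
      have hne : Nonempty V := Fintype.card_pos_iff.mp (by omega)
      obtain ⟨v⟩ := hne
      have hcards : Fintype.card ↥{w : V | w ≠ v} = Fintype.card V - 1 := by
        simp only [Set.mem_setOf_eq, ne_eq, Set.coe_setOf]
        rw [Fintype.card_subtype_compl, Fintype.card_subtype_eq]
      have hIH := IH ↥{w : V | w ≠ v} (G.induce {w | w ≠ v})
        (by omega) (cograph_induce hG _) (by omega)
      rcases hIH with h1 | h1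
      · exact s1 hG v h1
      · rw [compl_induce] at h1
        have := s1 (cograph_compl hG) v h1
        rw [compl_compl] at this
        exact this.symm

/-- lifting twins from an adjacency-closed induced subgraph -/
lemma tw_lift {V : Type u} {G : SimpleGraph V} {t : Set V}
    (ht : ∀ a b, a ∈ t → G.Adj a b → b ∈ t) (h : Tw (G.induce t)) : Tw G := by
  obtain ⟨u, v, huv, h⟩ := h
  have hadj : ∀ (a b : ↥t), (G.induce t).Adj a b ↔ G.Adj ↑a ↑b := by intro a b; simp
  refine ⟨↑u, ↑v, Subtype.coe_injective.ne huv, ?_⟩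
  rcases h with h | h
  · left
    ext w
    simp only [SimpleGraph.mem_neighborSet]
    constructor
    · intro hw
      have hwt : w ∈ t := ht _ _ u.2 hw
      have : (⟨w, hwt⟩ : ↥t) ∈ (G.induce t).neighborSet u := (hadj u ⟨w, hwt⟩).mpr hw
      rw [h] at this
      exact (hadj v ⟨w, hwt⟩).mp this
    · intro hw
      have hwt : w ∈ t := ht _ _ v.2 hw
      have : (⟨w, hwt⟩ : ↥t) ∈ (G.induce t).neighborSet v := (hadj v ⟨w, hwt⟩).mpr hw
      rw [← h] at this
      exact (hadj u ⟨w, hwt⟩).mp this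
  · right
    ext w
    simp only [Set.mem_insert_iff, SimpleGraph.mem_neighborSet]
    have key : ∀ (x y : ↥t), insert x ((G.induce t).neighborSet x) =
        insert y ((G.induce t).neighborSet y) →
        (w = ↑x ∨ G.Adj ↑x w) → (w = ↑y ∨ G.Adj ↑y w) := by
      intro x y hxy hw
      have hwt : w ∈ t := by
        rcases hw with rfl | hw
        · exact x.2
        · exact ht _ _ x.2 hw
      have hmem : (⟨w, hwt⟩ : ↥t) ∈ insert x ((G.induce t).neighborSet x) := by
        rcases hw with hw | hw
        · left; exact Subtype.ext hw
        · right; exact (hadj x ⟨w, hwt⟩).mpr hw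
      rw [hxy] at hmem
      rcases hmem with hmem | hmem
      · left; exact congrArg Subtype.val hmem
      · right; exact (hadj y ⟨w, hwt⟩).mp hmem
    exact ⟨key u v h, key v u h.symm⟩

lemma disc_tw {V : Type u} [Fintype V] {G : SimpleGraph V}
    (IH : ∀ (W : Type u) [Fintype W] (H : SimpleGraph W),
      Fintype.card W < Fintype.card V → IsCograph H → 1 < Fintype.card W → Tw H)
    (hG : IsCograph G) (h2 : 1 < Fintype.card V) (hp : ¬G.Preconnected) : Tw G := by
  simp only [SimpleGraph.Preconnected, not_forall] at hp
  obtain ⟨a, b, hab⟩ := hp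
  by_cases hE : ∃ x y, G.Adj x y
  · obtain ⟨x, y, hxy⟩ := hE
    set t : Set V := {w | G.Reachable x w} with htdef
    have ht : ∀ p q, p ∈ t → G.Adj p q → q ∈ t :=
      fun p q hp' hadj => hp'.trans hadj.reachable
    have hxt : x ∈ t := SimpleGraph.Reachable.refl x
    have hyt : y ∈ t := hxy.reachable
    have hzt : ∃ z, z ∉ t := by
      by_contra hcon
      push_neg at hcon
      exact hab ((hcon a).symm.trans (hcon b))
    obtain ⟨z, hz⟩ := hzt
    have hcard : Fintype.card ↥t < Fintype.card V := by
      have : z ∉ t := hz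
      exact Fintype.card_subtype_lt (p := fun w => w ∈ t) this
    have h2t : 1 < Fintype.card ↥t :=
      Fintype.one_lt_card_iff_nontrivial.mpr
        ⟨⟨x, hxt⟩, ⟨y, hyt⟩, fun e => G.ne_of_adj hxy (congrArg Subtype.val e)⟩
    exact tw_lift ht (IH ↥t (G.induce t) hcard (cograph_induce hG t) h2t)
  · push_neg at hE
    obtain ⟨u, v, huv⟩ := Fintype.one_lt_card_iff.mp h2
    refine ⟨u, v, huv, Or.inl ?_⟩
    ext w
    simp only [SimpleGraph.mem_neighborSet]
    exact ⟨fun h => absurd h (hE u w), fun h => absurd h (hE v w)⟩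

lemma main_tw : ∀ (n : ℕ) (V : Type u) [Fintype V] (G : SimpleGraph V),
    Fintype.card V ≤ n → IsCograph G → 1 < Fintype.card V → Tw G := by
  intro n
  induction n with
  | zero => intro V _ G h _ h2; omega
  | succ n IH =>
    intro V _ G hle hG h2
    have IH' : ∀ (W : Type u) [Fintype W] (H : SimpleGraph W),
        Fintype.card W < Fintype.card V → IsCograph H → 1 < Fintype.card W → Tw H := by
      intro W _ H hlt hH h2'
      exact IH W H (by omega) hH h2'
    by_cases hp : G.Preconnected
    · have hs := seinsche (Fintype.card V) V G le_rfl hG h2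
      rcases hs with hs | hs
      · exact absurd hp hs
      · refine tw_compl (disc_tw ?_ (cograph_compl hG) h2 hs)
        intro W _ H hlt hH h2'
        exact IH' W H (by simpa using hlt) hH h2'
    · exact disc_tw IH' hG h2 hp

end CographAux

/-- A graph is a cograph iff every induced subgraph with more than one vertex has a
pair of duplicate or a pair of coduplicate vertices. -/
theorem cograph_iff_dup_or_codup {V : Type*} [Fintype V] (G : SimpleGraph V) :
    IsCograph G ↔ ∀ s : Set V, 1 < s.ncard →
      ∃ u v : ↥s, u ≠ v ∧
        ((G.induce s).neighborSet u = (G.induce s).neighborSet v ∨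
          insert u ((G.induce s).neighborSet u) = insert v ((G.induce s).neighborSet v)) := by
  constructor
  · intro hG s hs
    have hcard : 1 < Fintype.card ↥s := by
      rwa [Set.ncard_eq_toFinset_card', Set.toFinset_card] at hs
    exact CographAux.main_tw (Fintype.card ↥s) ↥s (G.induce s) le_rfl
      (CographAux.cograph_induce hG s) hcard
  · intro h
    by_contra hnc
    rw [IsCograph, not_isEmpty_iff] at hnc
    obtain ⟨f⟩ := hnc
    set s : Set V := Set.range ⇑f with hsdef
    have h01 : f 0 ≠ f 1 := f.injective.ne (by decide)
    have hs : 1 < s.ncard := by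
      have hsub : ({f 0, f 1} : Set V) ⊆ s := by
        rintro w (rfl | rfl)
        exacts [⟨0, rfl⟩, ⟨1, rfl⟩]
      calc 1 < ({f 0, f 1} : Set V).ncard := by rw [Set.ncard_pair h01]; norm_num
        _ ≤ s.ncard := Set.ncard_le_ncard hsub (Set.finite_range ⇑f)
    obtain ⟨u, v, huv, hor⟩ := h s hs
    obtain ⟨i, hi⟩ := u.2
    obtain ⟨j, hj⟩ := v.2
    have hij : i ≠ j := by
      rintro rfl
      exact huv (Subtype.ext (hi ▸ hj ▸ rfl))
    have hadj : ∀ (k l : Fin 4), G.Adj (f k) (f l) ↔ (SimpleGraph.pathGraph 4).Adj k l :=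
      fun k l => f.map_adj_iff
    have hmem : ∀ k : Fin 4, f k ∈ s := fun k => ⟨k, rfl⟩
    rcases hor with he | he
    · have key : ∀ k : Fin 4, (SimpleGraph.pathGraph 4).Adj i k ↔
          (SimpleGraph.pathGraph 4).Adj j k := by
        intro k
        have h1 := Set.ext_iff.mp he ⟨f k, hmem k⟩
        simp only [SimpleGraph.mem_neighborSet, SimpleGraph.comap_adj,
          Function.Embedding.coe_subtype] at h1
        rw [← hi, ← hj] at h1
        rw [← hadj i k, ← hadj j k]
        exact h1
      simp only [SimpleGraph.pathGraph_adj] at key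
      have dec : ∀ i j : Fin 4, i ≠ j →
          ∃ k : Fin 4, ¬(((i : ℕ) + 1 = ↑k ∨ (k : ℕ) + 1 = ↑i) ↔
            ((j : ℕ) + 1 = ↑k ∨ (k : ℕ) + 1 = ↑j)) := by decide
      obtain ⟨k, hk⟩ := dec i j hij
      exact hk (key k)
    · have key : ∀ k : Fin 4, (k = i ∨ (SimpleGraph.pathGraph 4).Adj i k) ↔
          (k = j ∨ (SimpleGraph.pathGraph 4).Adj j k) := by
        intro k
        have h1 := Set.ext_iff.mp he ⟨f k, hmem k⟩
        simp only [Set.mem_insert_iff, SimpleGraph.mem_neighborSet, SimpleGraph.comap_adj,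
          Function.Embedding.coe_subtype, Subtype.ext_iff] at h1
        rw [← hi, ← hj] at h1
        rw [← hadj i k, ← hadj j k]
        constructor
        · rintro (rfl | hk)
          · rcases h1.mp (Or.inl rfl) with h' | h'
            · left; exact f.injective h'
            · right; exact h'
          · rcases h1.mp (Or.inr hk) with h' | h'
            · left; exact f.injective h'
            · right; exact h'
        · rintro (rfl | hk)
          · rcases h1.mpr (Or.inl rfl) with h' | h'
            · left; exact f.injective h'
            · right; exact h'
          · rcases h1.mpr (Or.inr hk) with h' | h'
            · left; exact f.injective h'
            · right; exact h'
      simp only [SimpleGraph.pathGraph_adj] at key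
      have dec : ∀ i j : Fin 4, i ≠ j →
          ∃ k : Fin 4, ¬((k = i ∨ ((i : ℕ) + 1 = ↑k ∨ (k : ℕ) + 1 = ↑i)) ↔
            (k = j ∨ ((j : ℕ) + 1 = ↑k ∨ (k : ℕ) + 1 = ↑j))) := by decide
      obtain ⟨k, hk⟩ := dec i j hij
      exact hk (key k)
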